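/- Confluence of the substitution subcalculus: the reflexive-transitive rewrite relation generated by the reading and merging rules of the suspension calculus is confluent on well-formed expressions; in particular every well-formed suspension expression has a unique normal form with respect to these rules. -/

import Mathlib

/- Terms of the suspension calculus: constants, de Bruijn indices `#i`,
applications, abstractions, and suspensions `[t, ol, nl, e]`. -/
mutual
inductive Tm : Type where
  | const : Nat → Tm
  | idx : Nat → Tm
  | app : Tm → Tm → Tm
  | lam : Tm → Tm
  | susp : Tm → Nat → Nat → Env → Tm
/-- Environments: `nil`, cons cells `(t,n)::e`, and merges `{e1, nl1, ol2, e2}`. -/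
inductive Env : Type where
  | nil : Env
  | econs : Tm → Nat → Env → Env
  | merge : Env → Nat → Nat → Env → Env
end

/-- Length of an environment. -/
def Env.len : Env → Nat
  | .nil => 0
  | .econs _ _ e => 1 + Env.len e
  | .merge e1 nl1 _ e2 => Env.len e1 + (Env.len e2 - nl1)

/-- Level of an environment. -/
def Env.lev : Env → Nat
  | .nil => 0
  | .econs _ l _ => l
  | .merge _ nl1 ol2 e2 => Env.lev e2 + (nl1 - ol2)

/- Well-formedness of suspension expressions. -/
mutual
inductive WfTm : Tm → Prop where
  | const : ∀ c, WfTm (.const c)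
  | idx : ∀ i, 1 ≤ i → WfTm (.idx i)
  | app : ∀ {t1 t2}, WfTm t1 → WfTm t2 → WfTm (.app t1 t2)
  | lam : ∀ {t}, WfTm t → WfTm (.lam t)
  | susp : ∀ {t e} (ol nl : Nat), WfTm t → WfEnv e → Env.len e = ol →
      Env.lev e ≤ nl → WfTm (.susp t ol nl e)
inductive WfEnv : Env → Prop where
  | nil : WfEnv .nil
  | econs : ∀ {t e} (l : Nat), WfTm t → WfEnv e → Env.lev e ≤ l → WfEnv (.econs t l e)
  | merge : ∀ {e1 e2} (nl1 ol2 : Nat), WfEnv e1 → WfEnv e2 → Env.lev e1 ≤ nl1 →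
      Env.len e2 = ol2 → WfEnv (.merge e1 nl1 ol2 e2)
end

/- One-step rewriting by the reading rules (r1)-(r6) and merging rules
(m1)-(m6), applied at any subexpression. -/
mutual
inductive SR : Tm → Tm → Prop where
  | r1 : ∀ c ol nl e, SR (.susp (.const c) ol nl e) (.const c)
  | r2 : ∀ i nl, 1 ≤ i → SR (.susp (.idx i) 0 nl .nil) (.idx (i + nl))
  | r3 : ∀ ol nl t l e, SR (.susp (.idx 1) ol nl (.econs t l e)) (.susp t 0 (nl - l) .nil)
  | r4 : ∀ i ol nl t l e, 1 < i →
      SR (.susp (.idx i) ol nl (.econs t l e)) (.susp (.idx (i - 1)) (ol - 1) nl e)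
  | r5 : ∀ t1 t2 ol nl e,
      SR (.susp (.app t1 t2) ol nl e) (.app (.susp t1 ol nl e) (.susp t2 ol nl e))
  | r6 : ∀ t ol nl e,
      SR (.susp (.lam t) ol nl e)
         (.lam (.susp t (ol + 1) (nl + 1) (.econs (.idx 1) (nl + 1) e)))
  | m1 : ∀ t ol1 nl1 e1 ol2 nl2 e2,
      SR (.susp (.susp t ol1 nl1 e1) ol2 nl2 e2)
         (.susp t (ol1 + (ol2 - nl1)) (nl2 + (nl1 - ol2)) (.merge e1 nl1 ol2 e2))
  | appL : ∀ {t1 t1'} (t2 : Tm), SR t1 t1' → SR (.app t1 t2) (.app t1' t2)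
  | appR : ∀ (t1 : Tm) {t2 t2'}, SR t2 t2' → SR (.app t1 t2) (.app t1 t2')
  | lamC : ∀ {t t'}, SR t t' → SR (.lam t) (.lam t')
  | suspT : ∀ {t t'} ol nl e, SR t t' → SR (.susp t ol nl e) (.susp t' ol nl e)
  | suspE : ∀ t ol nl {e e'}, SRE e e' → SR (.susp t ol nl e) (.susp t ol nl e')
inductive SRE : Env → Env → Prop where
  | m2 : ∀ e1 nl1, SRE (.merge e1 nl1 0 .nil) e1
  | m3 : ∀ ol2 e2, SRE (.merge .nil 0 ol2 e2) e2
  | m4 : ∀ nl1 ol2 t l e2, 1 ≤ nl1 →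
      SRE (.merge .nil nl1 ol2 (.econs t l e2)) (.merge .nil (nl1 - 1) (ol2 - 1) e2)
  | m5 : ∀ t n e1 nl1 ol2 s l e2, n < nl1 →
      SRE (.merge (.econs t n e1) nl1 ol2 (.econs s l e2))
          (.merge (.econs t n e1) (nl1 - 1) (ol2 - 1) e2)
  | m6 : ∀ t n e1 ol2 s l e2,
      SRE (.merge (.econs t n e1) n ol2 (.econs s l e2))
          (.econs (.susp t ol2 l (.econs s l e2)) (l + (n - ol2))
                  (.merge e1 n ol2 (.econs s l e2)))
  | consT : ∀ {t t'} l e, SR t t' → SRE (.econs t l e) (.econs t' l e)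
  | consE : ∀ t l {e e'}, SRE e e' → SRE (.econs t l e) (.econs t l e')
  | mergeL : ∀ {e1 e1'} nl1 ol2 e2, SRE e1 e1' →
      SRE (.merge e1 nl1 ol2 e2) (.merge e1' nl1 ol2 e2)
  | mergeR : ∀ e1 nl1 ol2 {e2 e2'}, SRE e2 e2' →
      SRE (.merge e1 nl1 ol2 e2) (.merge e1 nl1 ol2 e2')
end

/-- A term is in normal form w.r.t. the reading and merging rules. -/
def NormalT (t : Tm) : Prop := ∀ u, ¬ SR t u

/-- An environment is in normal form w.r.t. the reading and merging rules. -/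
def NormalE (e : Env) : Prop := ∀ u, ¬ SRE e u

/-! ## Auxiliary development -/

/-- Pure (suspension-free) terms with positive indices. -/
inductive Pu : Tm → Prop where
  | const : ∀ c, Pu (.const c)
  | idx : ∀ i, 1 ≤ i → Pu (.idx i)
  | app : ∀ {a b}, Pu a → Pu b → Pu (.app a b)
  | lam : ∀ {a}, Pu a → Pu (.lam a)

def upR (r : Nat → Nat) : Nat → Nat := fun j => if j ≤ 1 then 1 else r (j-1) + 1

def rename (r : Nat → Nat) : Tm → Tm
  | .const c => .const c
  | .idx i => .idx (r i)
  | .app a b => .app (rename r a) (rename r b)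
  | .lam a => .lam (rename (upR r) a)
  | .susp t ol nl e => .susp t ol nl e

def upS (σ : Nat → Tm) : Nat → Tm :=
  fun j => if j ≤ 1 then .idx 1 else rename (· + 1) (σ (j-1))

def subst (σ : Nat → Tm) : Tm → Tm
  | .const c => .const c
  | .idx i => σ i
  | .app a b => .app (subst σ a) (subst σ b)
  | .lam a => .lam (subst (upS σ) a)
  | .susp t ol nl e => .susp t ol nl e

/-- The substitution function denoted by a (pure) environment list with new-level `nl`. -/
def sigma (nl : Nat) (L : List (Tm × Nat)) : Nat → Tm := fun i =>
  match L[i-1]? with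
  | some p => rename (· + (nl - p.2)) p.1
  | none => .idx (i - L.length + nl)

/-- Levels of a list environment are bounded and weakly decreasing. -/
def LOK : List (Tm × Nat) → Nat → Prop
  | [], _ => True
  | (_, l) :: L, nl => l ≤ nl ∧ LOK L l

def PuL (L : List (Tm × Nat)) : Prop := ∀ p ∈ L, Pu p.1

/-- Merge of two normalised environment lists. -/
def mergeL : List (Tm × Nat) → Nat → List (Tm × Nat) → List (Tm × Nat)
  | [], 0, L2 => L2
  | [], _+1, [] => []
  | [], n+1, _ :: L2 => mergeL [] n L2
  | p :: L1, _, [] => p :: L1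
  | (t, n) :: L1, nl1, (s, l) :: L2 =>
    if n < nl1 then mergeL ((t, n) :: L1) (nl1 - 1) L2
    else (subst (sigma l ((s, l) :: L2)) t, l + (n - (L2.length + 1))) ::
      mergeL L1 n ((s, l) :: L2)
  termination_by L1 _ L2 => L1.length + L2.length
  decreasing_by all_goals simp +arith [List.length]

mutual
def evalT : Tm → Tm
  | .const c => .const c
  | .idx i => .idx i
  | .app a b => .app (evalT a) (evalT b)
  | .lam a => .lam (evalT a)
  | .susp t _ nl e => subst (sigma nl (evalE e)) (evalT t)
def evalE : Env → List (Tm × Nat)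
  | .nil => []
  | .econs t l e => (evalT t, l) :: evalE e
  | .merge e1 nl1 _ e2 => mergeL (evalE e1) nl1 (evalE e2)
end

def toEnv : List (Tm × Nat) → Env
  | [] => .nil
  | (t, l) :: L => .econs t l (toEnv L)

/-! ### Basic lemmas about rename/subst -/

def posR (r : Nat → Nat) : Prop := ∀ i, 1 ≤ i → 1 ≤ r i

theorem posR_upR {r} (h : posR r) : posR (upR r) := by
  intro i hi; unfold upR; split <;> omega

theorem posR_add (k : Nat) : posR (· + k) := by intro i hi; show 1 ≤ i + k; omega

theorem upR_one (r : Nat → Nat) : upR r 1 = 1 := by simp [upR]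

theorem upR_succ (r : Nat → Nat) {i : Nat} (hi : 1 ≤ i) : upR r (i+1) = r i + 1 := by
  simp [upR, show ¬ (i + 1 ≤ 1) by omega]

theorem upS_one (σ : Nat → Tm) : upS σ 1 = .idx 1 := by simp [upS]

theorem upS_succ (σ : Nat → Tm) {i : Nat} (hi : 1 ≤ i) :
    upS σ (i+1) = rename (· + 1) (σ i) := by
  simp [upS, show ¬ (i + 1 ≤ 1) by omega]

theorem one_or_succ {i : Nat} (hi : 1 ≤ i) : i = 1 ∨ ∃ j, 1 ≤ j ∧ i = j + 1 := by
  rcases i with _ | j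
  · omega
  · rcases j with _ | j
    · exact Or.inl rfl
    · exact Or.inr ⟨j+1, by omega, rfl⟩

theorem ren_ext {t : Tm} (ht : Pu t) : ∀ {r r' : Nat → Nat},
    (∀ i, 1 ≤ i → r i = r' i) → rename r t = rename r' t := by
  induction ht with
  | const c => intro r r' h; rfl
  | idx i hi => intro r r' h; simp [rename, h i hi]
  | app ha hb iha ihb => intro r r' h; simp [rename, iha h, ihb h]
  | lam ha ih =>
    intro r r' h; simp only [rename, Tm.lam.injEq]
    apply ih; intro i hi
    obtain rfl | ⟨j, hj, rfl⟩ := one_or_succ hi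
    · simp [upR_one]
    · rw [upR_succ _ hj, upR_succ _ hj, h j hj]

theorem sub_ext {t : Tm} (ht : Pu t) : ∀ {σ σ' : Nat → Tm},
    (∀ i, 1 ≤ i → σ i = σ' i) → subst σ t = subst σ' t := by
  induction ht with
  | const c => intro σ σ' h; rfl
  | idx i hi => intro σ σ' h; simp [subst, h i hi]
  | app ha hb iha ihb => intro σ σ' h; simp [subst, iha h, ihb h]
  | lam ha ih =>
    intro σ σ' h; simp only [subst, Tm.lam.injEq]
    apply ih; intro i hi
    obtain rfl | ⟨j, hj, rfl⟩ := one_or_succ hi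
    · simp [upS_one]
    · rw [upS_succ _ hj, upS_succ _ hj, h j hj]

theorem ren_pu {t : Tm} (ht : Pu t) : ∀ {r : Nat → Nat}, posR r → Pu (rename r t) := by
  induction ht with
  | const c => intro r _; exact .const c
  | idx i hi => intro r hr; exact .idx _ (hr i hi)
  | app ha hb iha ihb => intro r hr; exact .app (iha hr) (ihb hr)
  | lam ha ih => intro r hr; exact .lam (ih (posR_upR hr))

theorem ren_ren {t : Tm} (ht : Pu t) : ∀ {r r' : Nat → Nat}, posR r' →
    rename r (rename r' t) = rename (fun i => r (r' i)) t := by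
  induction ht with
  | const c => intro r r' _; rfl
  | idx i hi => intro r r' _; rfl
  | app ha hb iha ihb => intro r r' h; simp [rename, iha h, ihb h]
  | lam ha ih =>
    intro r r' h; simp only [rename, Tm.lam.injEq]
    rw [ih (posR_upR h)]
    apply ren_ext ha; intro i hi
    obtain rfl | ⟨j, hj, rfl⟩ := one_or_succ hi
    · simp [upR_one]
    · rw [upR_succ _ hj, upR_succ _ hj, upR_succ _ (h _ hj)]

theorem sub_ren {t : Tm} (ht : Pu t) : ∀ {σ : Nat → Tm} {r : Nat → Nat}, posR r →
    subst σ (rename r t) = subst (fun i => σ (r i)) t := by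
  induction ht with
  | const c => intro σ r _; rfl
  | idx i hi => intro σ r _; rfl
  | app ha hb iha ihb => intro σ r h; simp [rename, subst, iha h, ihb h]
  | lam ha ih =>
    intro σ r h; simp only [rename, subst, Tm.lam.injEq]
    rw [ih (posR_upR h)]
    apply sub_ext ha; intro i hi
    obtain rfl | ⟨j, hj, rfl⟩ := one_or_succ hi
    · simp [upR_one, upS_one]
    · rw [upR_succ _ hj, upS_succ _ (h _ hj), upS_succ _ hj]

theorem pu_upS {σ : Nat → Tm} (hσ : ∀ i, 1 ≤ i → Pu (σ i)) :
    ∀ i, 1 ≤ i → Pu (upS σ i) := by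
  intro i hi
  obtain rfl | ⟨j, hj, rfl⟩ := one_or_succ hi
  · rw [upS_one]; exact .idx 1 le_rfl
  · rw [upS_succ _ hj]; exact ren_pu (hσ _ hj) (posR_add 1)

theorem ren_sub {t : Tm} (ht : Pu t) : ∀ {σ : Nat → Tm} {r : Nat → Nat}, posR r →
    (∀ i, 1 ≤ i → Pu (σ i)) →
    rename r (subst σ t) = subst (fun i => rename r (σ i)) t := by
  induction ht with
  | const c => intro σ r _ _; rfl
  | idx i hi => intro σ r _ _; rfl
  | app ha hb iha ihb => intro σ r h hσ; simp [subst, rename, iha h hσ, ihb h hσ]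
  | lam ha ih =>
    intro σ r h hσ; simp only [subst, rename, Tm.lam.injEq]
    rw [ih (posR_upR h) (pu_upS hσ)]
    apply sub_ext ha; intro i hi
    obtain rfl | ⟨j, hj, rfl⟩ := one_or_succ hi
    · rw [upS_one, upS_one]; simp [rename, upR_one]
    · rw [upS_succ _ hj, upS_succ _ hj,
        ren_ren (hσ _ hj) (posR_add 1), ren_ren (hσ _ hj) h]
      apply ren_ext (hσ _ hj); intro m hm
      show upR r (m + 1) = r m + 1
      exact upR_succ _ hm

theorem sub_pu {t : Tm} (ht : Pu t) : ∀ {σ : Nat → Tm},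
    (∀ i, 1 ≤ i → Pu (σ i)) → Pu (subst σ t) := by
  induction ht with
  | const c => intro σ _; exact .const c
  | idx i hi => intro σ hσ; exact hσ i hi
  | app ha hb iha ihb => intro σ hσ; exact .app (iha hσ) (ihb hσ)
  | lam ha ih => intro σ hσ; exact .lam (ih (pu_upS hσ))

theorem subst_subst {t : Tm} (ht : Pu t) : ∀ {σ τ : Nat → Tm},
    (∀ i, 1 ≤ i → Pu (σ i)) → (∀ i, 1 ≤ i → Pu (τ i)) →
    subst σ (subst τ t) = subst (fun i => subst σ (τ i)) t := by
  induction ht with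
  | const c => intro σ τ _ _; rfl
  | idx i hi => intro σ τ _ _; rfl
  | app ha hb iha ihb => intro σ τ hσ hτ; simp [subst, iha hσ hτ, ihb hσ hτ]
  | lam ha ih =>
    intro σ τ hσ hτ; simp only [subst, Tm.lam.injEq]
    rw [ih (pu_upS hσ) (pu_upS hτ)]
    apply sub_ext ha; intro i hi
    obtain rfl | ⟨j, hj, rfl⟩ := one_or_succ hi
    · rw [upS_one, upS_one]; simp [subst, upS_one]
    · rw [upS_succ _ hj, upS_succ _ hj, sub_ren (hτ _ hj) (posR_add 1),
        ren_sub (hτ _ hj) (posR_add 1) hσ]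
      apply sub_ext (hτ _ hj); intro m hm
      show upS σ (m+1) = _
      exact upS_succ _ hm

theorem ren_eq_sub {t : Tm} (ht : Pu t) : ∀ {r : Nat → Nat},
    rename r t = subst (fun i => .idx (r i)) t := by
  induction ht with
  | const c => intro r; rfl
  | idx i hi => intro r; rfl
  | app ha hb iha ihb => intro r; simp [rename, subst, iha, ihb]
  | lam ha ih =>
    intro r; simp only [rename, subst, Tm.lam.injEq]
    rw [ih]
    apply sub_ext ha; intro i hi
    obtain rfl | ⟨j, hj, rfl⟩ := one_or_succ hi
    · rw [upS_one, upR_one]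
    · rw [upS_succ _ hj, upR_succ _ hj]; rfl

theorem shift_shift {t : Tm} (ht : Pu t) (k m : Nat) :
    rename (· + k) (rename (· + m) t) = rename (· + (m + k)) t := by
  rw [ren_ren ht (posR_add m)]
  apply ren_ext ht; intro i _; show i + m + k = i + (m + k); omega

theorem shift_zero {t : Tm} (ht : Pu t) : rename (· + 0) t = t := by
  induction ht with
  | const c => rfl
  | idx i hi => rfl
  | app ha hb iha ihb => show Tm.app _ _ = _; rw [iha, ihb]
  | lam ha ih =>
    show Tm.lam _ = _
    rw [ren_ext ha (r' := (· + 0)) ?_, ih]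
    intro i hi
    obtain rfl | ⟨j, hj, rfl⟩ := one_or_succ hi
    · rw [upR_one]
    · rw [upR_succ _ hj]

/-! ### Lemmas about sigma and mergeL -/

theorem sigma_lookup {nl : Nat} {L : List (Tm × Nat)} {i : Nat} (hi : 1 ≤ i)
    (hle : i ≤ L.length) :
    sigma nl L i = rename (· + (nl - (L[i-1]'(by omega)).2)) (L[i-1]'(by omega)).1 := by
  unfold sigma
  have : L[i-1]? = some (L[i-1]'(by omega)) := List.getElem?_eq_getElem (by omega)
  rw [this]

theorem sigma_over {nl : Nat} {L : List (Tm × Nat)} {i : Nat} (hi : L.length < i) :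
    sigma nl L i = .idx (i - L.length + nl) := by
  unfold sigma
  have : L[i-1]? = none := List.getElem?_eq_none (by omega)
  rw [this]

theorem sigma_nil {nl i : Nat} : sigma nl [] i = .idx (i + nl) := by
  unfold sigma; simp

theorem sigma_cons_succ {nl : Nat} {x : Tm × Nat} {L : List (Tm × Nat)} {j : Nat}
    (hj : 1 ≤ j) : sigma nl (x :: L) (j+1) = sigma nl L j := by
  unfold sigma
  have h1 : (x :: L)[j+1-1]? = L[j-1]? := by
    have : j + 1 - 1 = (j - 1) + 1 := by omega
    rw [this, List.getElem?_cons_succ]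
  rw [h1]
  rcases h : L[j-1]? with _ | p
  · simp only [List.length_cons]
    congr 1; omega
  · rfl

theorem sigma_pu {nl : Nat} {L : List (Tm × Nat)} (hL : PuL L) :
    ∀ i, 1 ≤ i → Pu (sigma nl L i) := by
  intro i hi
  by_cases h : i ≤ L.length
  · rw [sigma_lookup hi h]
    exact ren_pu (hL _ (List.getElem_mem _)) (posR_add _)
  · rw [sigma_over (by omega)]
    exact .idx _ (by omega)

theorem LOK_weaken : ∀ {L : List (Tm × Nat)} {n m : Nat}, LOK L n → n ≤ m → LOK L m := by
  intro L n m h hnm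
  cases L with
  | nil => trivial
  | cons p L => exact ⟨le_trans h.1 hnm, h.2⟩

theorem LOK_entry : ∀ {L : List (Tm × Nat)} {n : Nat}, LOK L n →
    ∀ p ∈ L, p.2 ≤ n := by
  intro L
  induction L with
  | nil => intro n _ p hp; cases hp
  | cons q L ih =>
    intro n h p hp
    rcases List.mem_cons.mp hp with rfl | hp
    · exact h.1
    · exact le_trans (ih h.2 p hp) h.1

theorem PuL_cons {p : Tm × Nat} {L : List (Tm × Nat)} (h : PuL (p :: L)) : PuL L :=
  fun q hq => h q (List.mem_cons_of_mem _ hq)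

/-- `upS` of a `sigma` is the `sigma` of the extended environment. -/
theorem upS_sigma {nl : Nat} {L : List (Tm × Nat)} (hL : LOK L nl) (hP : PuL L) :
    ∀ i, 1 ≤ i → upS (sigma nl L) i = sigma (nl+1) ((.idx 1, nl+1) :: L) i := by
  intro i hi
  obtain rfl | ⟨j, hj, rfl⟩ := one_or_succ hi
  · rw [upS_one, sigma_lookup le_rfl (by simp)]
    simp [rename]
  · rw [upS_succ _ hj, sigma_cons_succ hj]
    by_cases h : j ≤ L.length
    · rw [sigma_lookup hj h, sigma_lookup hj h]
      have hl : (L[j-1]'(by omega)).2 ≤ nl := LOK_entry hL _ (List.getElem_mem _)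
      rw [shift_shift (hP _ (List.getElem_mem _))]
      congr 1; funext x; omega
    · rw [sigma_over (by omega), sigma_over (by omega)]
      simp [rename]; omega

theorem mergeL_nil2 : ∀ (L1 : List (Tm × Nat)) (nl1 : Nat), mergeL L1 nl1 [] = L1 := by
  intro L1 nl1
  match L1, nl1 with
  | [], 0 => rw [mergeL]
  | [], n+1 => rw [mergeL]
  | p :: L1, nl1 => rw [mergeL]

theorem mergeL_len : ∀ (L1 : List (Tm × Nat)) (nl1 : Nat) (L2 : List (Tm × Nat)),
    LOK L1 nl1 → (mergeL L1 nl1 L2).length = L1.length + (L2.length - nl1) := by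
  intro L1 nl1 L2
  induction L1, nl1, L2 using mergeL.induct with
  | case1 L2 => intro _; simp [mergeL]
  | case2 n => intro _; simp [mergeL]
  | case3 n x L2 ih =>
    intro _; rw [mergeL, ih trivial]; simp only [List.length_nil, List.length_cons]; omega
  | case4 p L1 x => intro _; rw [mergeL_nil2]; simp
  | case5 t n L1 nl1 s l L2 hlt ih =>
    intro h; rw [mergeL, if_pos hlt, ih ⟨by omega, h.2⟩]
    simp only [List.length_cons]; omega
  | case6 t n L1 nl1 s l L2 hlt ih =>
    intro h
    have hn : n = nl1 := by have := h.1; omega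
    subst hn
    rw [mergeL, if_neg hlt]
    simp only [List.length_cons]
    rw [ih h.2]
    simp only [List.length_cons]
    omega

theorem mergeL_LOK : ∀ (L1 : List (Tm × Nat)) (nl1 : Nat) (L2 : List (Tm × Nat))
    (nl2 : Nat), LOK L1 nl1 → LOK L2 nl2 →
    LOK (mergeL L1 nl1 L2) (nl2 + (nl1 - L2.length)) := by
  intro L1 nl1 L2
  induction L1, nl1, L2 using mergeL.induct with
  | case1 L2 => intro nl2 _ hh; rw [mergeL]; exact LOK_weaken hh (by omega)
  | case2 n => intro nl2 _ _; rw [mergeL]; trivial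
  | case3 n x L2 ih =>
    intro nl2 _ hh
    rw [mergeL]
    have := ih nl2 trivial (LOK_weaken hh.2 hh.1)
    exact LOK_weaken this (by simp only [List.length_cons]; omega)
  | case4 p L1 x =>
    intro nl2 h1 _; rw [mergeL_nil2]
    exact LOK_weaken h1 (by simp only [List.length_nil]; omega)
  | case5 t n L1 nl1 s l L2 hlt ih =>
    intro nl2 h1 hh
    rw [mergeL, if_pos hlt]
    have := ih nl2 ⟨by omega, h1.2⟩ (LOK_weaken hh.2 hh.1)
    exact LOK_weaken this (by simp only [List.length_cons]; omega)
  | case6 t n L1 nl1 s l L2 hlt ih =>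
    intro nl2 h1 hh
    have hn : n = nl1 := by have := h1.1; omega
    subst hn
    rw [mergeL, if_neg hlt]
    have hlen : ((s, l) :: L2).length = L2.length + 1 := by simp
    refine ⟨by have := hh.1; omega, ?_⟩
    have := ih l h1.2 (⟨le_rfl, hh.2⟩ : LOK ((s,l)::L2) l)
    exact LOK_weaken this (by simp only [List.length_cons]; omega)

theorem mergeL_pu : ∀ (L1 : List (Tm × Nat)) (nl1 : Nat) (L2 : List (Tm × Nat)),
    PuL L1 → PuL L2 → PuL (mergeL L1 nl1 L2) := by
  intro L1 nl1 L2
  induction L1, nl1, L2 using mergeL.induct with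
  | case1 L2 => intro _ hh; rw [mergeL]; exact hh
  | case2 n => intro _ _; rw [mergeL]; intro p hp; cases hp
  | case3 n x L2 ih =>
    intro _ hh
    rw [mergeL]
    exact ih (by intro p hp; cases hp) (PuL_cons hh)
  | case4 p L1 x => intro h1 _; rw [mergeL_nil2]; exact h1
  | case5 t n L1 nl1 s l L2 hlt ih =>
    intro h1 hh
    rw [mergeL, if_pos hlt]
    exact ih h1 (PuL_cons hh)
  | case6 t n L1 nl1 s l L2 hlt ih =>
    intro h1 hh
    rw [mergeL, if_neg hlt]
    intro p hp
    rcases List.mem_cons.mp hp with rfl | hp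
    · exact sub_pu (h1 _ (List.mem_cons_self)) (sigma_pu hh)
    · exact ih (PuL_cons h1) hh p hp

/-! ### The composition lemma -/

theorem sigma_merge : ∀ (k : Nat) (L1 : List (Tm × Nat)) (nl1 : Nat)
    (L2 : List (Tm × Nat)) (nl2 : Nat), L1.length + L2.length ≤ k →
    LOK L1 nl1 → LOK L2 nl2 → PuL L1 → PuL L2 →
    ∀ i, 1 ≤ i →
    subst (sigma nl2 L2) (sigma nl1 L1 i) =
      sigma (nl2 + (nl1 - L2.length)) (mergeL L1 nl1 L2) i := by
  intro k
  induction k using Nat.strong_induction_on with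
  | _ k IH =>
  intro L1 nl1 L2 nl2 hk h1 h2 p1 p2 i hi
  cases L2 with
  | nil =>
    rw [mergeL_nil2]
    simp only [List.length_nil]
    by_cases hle : i ≤ L1.length
    · have hmem : L1[i-1]'(by omega) ∈ L1 := List.getElem_mem _
      have hpu : Pu (L1[i-1]'(by omega)).1 := p1 _ hmem
      have hlev : (L1[i-1]'(by omega)).2 ≤ nl1 := LOK_entry h1 _ hmem
      rw [sigma_lookup hi hle, sigma_lookup hi hle]
      rw [sub_ren hpu (posR_add _), ren_eq_sub hpu]
      apply sub_ext hpu
      intro j hj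
      show sigma nl2 [] (j + (nl1 - _)) = _
      rw [sigma_nil]
      congr 1
      omega
    · rw [sigma_over (by omega), sigma_over (by omega)]
      show sigma nl2 [] (i - L1.length + nl1) = _
      rw [sigma_nil]
      congr 1
      omega
  | cons p L2 =>
    rcases p with ⟨s, l⟩
    cases L1 with
    | nil =>
      cases nl1 with
      | zero =>
        rw [mergeL, sigma_nil]
        show sigma nl2 ((s,l) :: L2) (i + 0) = _
        rw [Nat.add_zero]
        congr 1
        omega
      | succ m =>
        rw [mergeL, sigma_nil]
        show sigma nl2 ((s,l) :: L2) (i + (m+1)) = _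
        rw [show i + (m+1) = (i + m) + 1 by omega, sigma_cons_succ (by omega)]
        have IH' := IH (L2.length) (by simp only [List.length_nil, List.length_cons] at hk ⊢; omega)
          [] m L2 nl2 (by simp) trivial (LOK_weaken h2.2 h2.1)
          (by intro p hp; cases hp) (PuL_cons p2) i hi
        rw [sigma_nil] at IH'
        have heq : subst (sigma nl2 L2) (.idx (i+m)) = sigma nl2 L2 (i+m) := rfl
        rw [heq] at IH'
        rw [IH']
        congr 1
        simp only [List.length_nil, List.length_cons]
        omega
    | cons q L1 =>
      rcases q with ⟨t, n⟩
      by_cases hlt : n < nl1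
      · rw [mergeL, if_pos hlt]
        have hsum : L1.length + 1 + L2.length < k := by
          simp only [List.length_cons] at hk; omega
        have IH' := IH (L1.length + 1 + L2.length) hsum
          ((t,n) :: L1) (nl1 - 1) L2 nl2 (by simp only [List.length_cons]; omega)
          ⟨by omega, h1.2⟩ (LOK_weaken h2.2 h2.1) p1 (PuL_cons p2) i hi
        have harith : nl2 + (nl1 - ((s,l)::L2).length) = nl2 + ((nl1 - 1) - L2.length) := by
          (try simp only [List.length_cons]); omega
        rw [harith, ← IH']
        -- now compare the two substituted forms
        by_cases hle : i ≤ ((t,n) :: L1).length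
        · have hmem : ((t,n)::L1)[i-1]'(by omega) ∈ (t,n)::L1 := List.getElem_mem _
          have hpu : Pu ((((t,n)::L1))[i-1]'(by omega)).1 := p1 _ hmem
          have hok : LOK ((t,n)::L1) n := ⟨le_rfl, h1.2⟩
          have hlev : ((((t,n)::L1))[i-1]'(by omega)).2 ≤ n := LOK_entry hok _ hmem
          rw [sigma_lookup hi hle, sigma_lookup hi hle]
          rw [sub_ren hpu (posR_add _), sub_ren hpu (posR_add _)]
          apply sub_ext hpu
          intro j hj
          show sigma nl2 ((s,l)::L2) (j + (nl1 - _)) = sigma nl2 L2 (j + ((nl1 - 1) - _))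
          rw [show j + (nl1 - ((((t,n)::L1))[i-1]'(by omega)).2)
              = (j + ((nl1 - 1) - ((((t,n)::L1))[i-1]'(by omega)).2)) + 1 by omega,
            sigma_cons_succ (by omega)]
        · rw [sigma_over (by omega), sigma_over (by omega)]
          show sigma nl2 ((s,l)::L2) _ = sigma nl2 L2 _
          rw [show i - ((t,n)::L1).length + nl1
              = (i - ((t,n)::L1).length + (nl1 - 1)) + 1 by omega,
            sigma_cons_succ (by omega)]
      · have hn : n = nl1 := by have := h1.1; omega
        subst hn
        rw [mergeL, if_neg hlt]
        obtain rfl | ⟨j, hj, rfl⟩ := one_or_succ hi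
        · rw [sigma_lookup le_rfl (by simp), sigma_lookup le_rfl (by simp)]
          simp only [show (1:Nat) - 1 = 0 from rfl, List.getElem_cons_zero]
          have hpt : Pu t := p1 _ (List.mem_cons_self)
          rw [Nat.sub_self, shift_zero hpt]
          have harith : nl2 + (n - ((s,l)::L2).length) - (l + (n - (L2.length + 1)))
              = nl2 - l := by
            have := h2.1; (try simp only [List.length_cons]); omega
          rw [harith]
          rw [ren_sub hpt (posR_add _) (sigma_pu p2)]
          apply sub_ext hpt
          intro j hj
          show sigma nl2 ((s,l)::L2) j = rename (· + (nl2 - l)) (sigma l ((s,l)::L2) j)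
          by_cases hle2 : j ≤ ((s,l)::L2).length
          · have hmem : ((s,l)::L2)[j-1]'(by omega) ∈ (s,l)::L2 := List.getElem_mem _
            have hpu2 : Pu ((((s,l)::L2))[j-1]'(by omega)).1 := p2 _ hmem
            have hok2 : LOK ((s,l)::L2) l := ⟨le_rfl, h2.2⟩
            have hlev2 : ((((s,l)::L2))[j-1]'(by omega)).2 ≤ l := LOK_entry hok2 _ hmem
            rw [sigma_lookup hj hle2, sigma_lookup hj hle2, shift_shift hpu2]
            congr 1
            funext x
            have := h2.1
            omega
          · rw [sigma_over (by omega), sigma_over (by omega)]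
            simp only [rename]
            congr 1
            have := h2.1
            omega
        · rw [sigma_cons_succ hj, sigma_cons_succ hj]
          have hsum : L1.length + (L2.length + 1) < k := by
            simp only [List.length_cons] at hk; omega
          have IH' := IH (L1.length + (L2.length + 1)) hsum
            L1 n ((s,l) :: L2) nl2 (by simp only [List.length_cons]; omega)
            h1.2 h2 (PuL_cons p1) p2 j hj
          rw [IH']

/-! ### Evaluation produces pure results -/

mutual
theorem evalT_pu : ∀ (t : Tm), WfTm t → Pu (evalT t)
  | .const c, _ => by rw [evalT]; exact .const c
  | .idx i, h => by
    rw [evalT]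
    cases h with
    | idx _ hi => exact .idx i hi
  | .app a b, h => by
    rw [evalT]
    cases h with
    | app ha hb => exact .app (evalT_pu a ha) (evalT_pu b hb)
  | .lam a, h => by
    rw [evalT]
    cases h with
    | lam ha => exact .lam (evalT_pu a ha)
  | .susp t ol nl e, h => by
    rw [evalT]
    cases h with
    | susp _ _ ht he hlen hlev =>
      exact sub_pu (evalT_pu t ht) (sigma_pu (evalE_facts e he).1)

theorem evalE_facts : ∀ (e : Env), WfEnv e →
    PuL (evalE e) ∧ LOK (evalE e) (Env.lev e) ∧ (evalE e).length = Env.len e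
  | .nil, _ => by
    rw [evalE]
    refine ⟨?_, trivial, rfl⟩
    intro p hp
    cases hp
  | .econs t l e, h => by
    rw [evalE]
    cases h with
    | econs _ ht he hle =>
      obtain ⟨hp, hok, hlen⟩ := evalE_facts e he
      refine ⟨?_, ⟨le_rfl, LOK_weaken hok hle⟩, ?_⟩
      · intro p hp'
        rcases List.mem_cons.mp hp' with rfl | hp'
        · exact evalT_pu t ht
        · exact hp p hp'
      · simp only [List.length_cons, Env.len, Env.lev]
        omega
  | .merge e1 nl1 ol2 e2, h => by
    rw [evalE]
    cases h with
    | merge _ _ he1 he2 hlev1 hlen2 =>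
      obtain ⟨hp1, hok1, hlen1⟩ := evalE_facts e1 he1
      obtain ⟨hp2, hok2, hlen2'⟩ := evalE_facts e2 he2
      refine ⟨mergeL_pu _ _ _ hp1 hp2, ?_, ?_⟩
      · have := mergeL_LOK (evalE e1) nl1 (evalE e2) (Env.lev e2)
          (LOK_weaken hok1 hlev1) hok2
        simp only [Env.lev]
        rw [hlen2', hlen2] at this
        exact this
      · rw [mergeL_len _ _ _ (LOK_weaken hok1 hlev1), hlen1, hlen2']
        simp only [Env.len]
end

/-! ### Pure terms are normal -/

theorem pu_normal : ∀ {t u : Tm}, Pu t → ¬ SR t u := by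
  intro t u hp
  induction hp generalizing u with
  | const c => intro h; cases h
  | idx i hi => intro h; cases h
  | app ha hb iha ihb =>
    intro h
    cases h with
    | appL _ h1 => exact iha h1
    | appR _ h1 => exact ihb h1
  | lam ha ih =>
    intro h
    cases h with
    | lamC h1 => exact ih h1

theorem puL_normal : ∀ {L : List (Tm × Nat)} {u : Env}, PuL L → ¬ SRE (toEnv L) u := by
  intro L
  induction L with
  | nil => intro u _ h; cases h
  | cons p L ih =>
    intro u hp h
    rcases p with ⟨t, l⟩
    cases h with
    | consT _ _ h1 => exact pu_normal (hp _ (List.mem_cons_self)) h1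
    | consE _ _ h1 => exact ih (PuL_cons hp) h1

theorem normalT_of_pu {t : Tm} (h : Pu t) : NormalT t := fun _ h1 => pu_normal h h1

theorem normalE_of_puL {L : List (Tm × Nat)} (h : PuL L) : NormalE (toEnv L) :=
  fun _ h1 => puL_normal h h1

theorem rtg_normalT {t u : Tm} (hn : NormalT t) (h : Relation.ReflTransGen SR t u) :
    u = t := by
  cases (Relation.reflTransGen_iff_eq (fun u h1 => hn u h1)).mp h
  rfl

theorem rtg_normalE {e u : Env} (hn : NormalE e) (h : Relation.ReflTransGen SRE e u) :
    u = e := by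
  cases (Relation.reflTransGen_iff_eq (fun u h1 => hn u h1)).mp h
  rfl

/-! ### Subject reduction: well-formedness is preserved -/

mutual
theorem presT : ∀ (t : Tm) {t'}, SR t t' → WfTm t → WfTm t'
  | _, _, .r1 c ol nl e, _ => .const c
  | _, _, .r2 i nl hi, _ => .idx _ (by omega)
  | _, _, .r3 ol nl t l e, w => by
    cases w with
    | susp _ _ ht he hlen hlev =>
      cases he with
      | econs _ ht2 he2 hle2 =>
        exact .susp 0 (nl - l) ht2 .nil rfl (Nat.zero_le _)
  | _, _, .r4 i ol nl t l e hi, w => by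
    cases w with
    | susp _ _ ht he hlen hlev =>
      cases he with
      | econs _ ht2 he2 hle2 =>
        simp only [Env.len] at hlen
        simp only [Env.lev] at hlev
        exact .susp (ol - 1) nl (.idx _ (by omega)) he2 (by omega) (le_trans hle2 hlev)
  | _, _, .r5 t1 t2 ol nl e, w => by
    cases w with
    | susp _ _ ht he hlen hlev =>
      cases ht with
      | app h1 h2 =>
        exact .app (.susp ol nl h1 he hlen hlev) (.susp ol nl h2 he hlen hlev)
  | _, _, .r6 t ol nl e, w => by
    cases w with
    | susp _ _ ht he hlen hlev =>
      cases ht with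
      | lam h1 =>
        refine .lam (.susp (ol+1) (nl+1)  h1
          (.econs (nl+1) (.idx 1 le_rfl) he (by omega)) ?_ ?_)
        · simp only [Env.len] at hlen ⊢; omega
        · simp only [Env.lev]; omega
  | _, _, .m1 t ol1 nl1 e1 ol2 nl2 e2, w => by
    cases w with
    | susp _ _ hin he2 hlen2 hlev2 =>
      cases hin with
      | susp _ _ ht he1 hlen1 hlev1 =>
        refine .susp _ _ ht (.merge nl1 ol2 he1 he2 hlev1 hlen2) ?_ ?_
        · simp only [Env.len]; omega
        · simp only [Env.lev]; omega
  | _, _, .appL t2 h1, w => by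
    cases w with
    | app w1 w2 => exact .app (presT _ h1 w1) w2
  | _, _, .appR t1 h2, w => by
    cases w with
    | app w1 w2 => exact .app w1 (presT _ h2 w2)
  | _, _, .lamC h1, w => by
    cases w with
    | lam w1 => exact .lam (presT _ h1 w1)
  | _, _, .suspT ol nl e h1, w => by
    cases w with
    | susp _ _ ht he hlen hlev => exact .susp ol nl (presT _ h1 ht) he hlen hlev
  | _, _, .suspE t ol nl h1, w => by
    cases w with
    | susp _ _ ht he hlen hlev =>
      obtain ⟨he', hlen', hlev'⟩ := presE _ h1 he
      exact .susp ol nl ht he' (by omega) (le_trans hlev' hlev)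

theorem presE : ∀ (e : Env) {e'}, SRE e e' → WfEnv e →
    WfEnv e' ∧ Env.len e' = Env.len e ∧ Env.lev e' ≤ Env.lev e
  | _, _, .m2 e1 nl1, w => by
    cases w with
    | merge _ _ he1 he2 hlev1 hlen2 =>
      refine ⟨he1, ?_, ?_⟩ <;> simp only [Env.len, Env.lev] <;> omega
  | _, _, .m3 ol2 e2, w => by
    cases w with
    | merge _ _ he1 he2 hlev1 hlen2 =>
      refine ⟨he2, ?_, ?_⟩ <;> simp only [Env.len, Env.lev] <;> omega
  | _, _, .m4 nl1 ol2 t l e2 hnl, w => by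
    cases w with
    | merge _ _ he1 he2 hlev1 hlen2 =>
      cases he2 with
      | econs _ ht2 he2' hle2 =>
        simp only [Env.len] at hlen2
        refine ⟨.merge _ _ .nil he2' (Nat.zero_le _) (by omega), ?_, ?_⟩ <;>
          simp only [Env.len, Env.lev] <;> omega
  | _, _, .m5 t n e1 nl1 ol2 s l e2 hlt, w => by
    cases w with
    | merge _ _ he1 he2 hlev1 hlen2 =>
      cases he2 with
      | econs _ ht2 he2' hle2 =>
        simp only [Env.len] at hlen2
        simp only [Env.lev] at hlev1
        refine ⟨.merge _ _ he1 he2' (by simp only [Env.lev]; omega) (by omega), ?_, ?_⟩ <;>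
          simp only [Env.len, Env.lev] <;> omega
  | _, _, .m6 t n e1 ol2 s l e2, w => by
    cases w with
    | merge _ _ he1 he2 hlev1 hlen2 =>
      cases he1 with
      | econs _ ht1 he1' hle1 =>
        refine ⟨.econs _ (.susp ol2 l ht1 he2 hlen2 (by simp only [Env.lev]; omega))
          (.merge n ol2 he1' he2 hle1 hlen2) (by simp only [Env.lev]; omega), ?_, ?_⟩ <;>
          simp only [Env.len, Env.lev] <;> omega
  | _, _, .consT l e h1, w => by
    cases w with
    | econs _ ht he hle =>
      exact ⟨.econs l (presT _ h1 ht) he hle, rfl, le_rfl⟩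
  | _, _, .consE t l h1, w => by
    cases w with
    | econs _ ht he hle =>
      obtain ⟨he', hlen', hlev'⟩ := presE _ h1 he
      refine ⟨.econs l ht he' (le_trans hlev' hle), ?_, le_rfl⟩
      simp only [Env.len]; omega
  | _, _, .mergeL nl1 ol2 e2 h1, w => by
    cases w with
    | merge _ _ he1 he2 hlev1 hlen2 =>
      obtain ⟨he1', hlen1', hlev1'⟩ := presE _ h1 he1
      refine ⟨.merge nl1 ol2 he1' he2 (le_trans hlev1' hlev1) hlen2, ?_, le_rfl⟩
      simp only [Env.len]; omega
  | _, _, .mergeR e1 nl1 ol2 h2, w => by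
    cases w with
    | merge _ _ he1 he2 hlev1 hlen2 =>
      obtain ⟨he2', hlen2', hlev2'⟩ := presE _ h2 he2
      refine ⟨.merge nl1 ol2 he1 he2' hlev1 (by omega), ?_, ?_⟩ <;>
        simp only [Env.len, Env.lev] <;> omega
end

/-! ### Evaluation is invariant under rewriting -/

mutual
theorem invT : ∀ (t : Tm) {t'}, SR t t' → WfTm t → evalT t = evalT t'
  | _, _, .r1 c ol nl e, _ => by simp only [evalT]; rfl
  | _, _, .r2 i nl hi, _ => by
    simp only [evalT, evalE]
    show sigma nl [] i = _
    rw [sigma_nil]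
  | _, _, .r3 ol nl t l e, w => by
    cases w with
    | susp _ _ ht he hlen hlev =>
      cases he with
      | econs _ ht2 he2 hle2 =>
        simp only [evalT, evalE]
        show sigma nl ((evalT t, l) :: evalE e) 1 = subst (sigma (nl - l) []) (evalT t)
        rw [sigma_lookup le_rfl (by simp)]
        simp only [show (1:Nat) - 1 = 0 from rfl, List.getElem_cons_zero]
        rw [ren_eq_sub (evalT_pu t ht2)]
        apply sub_ext (evalT_pu t ht2)
        intro j hj
        rw [sigma_nil]
  | _, _, .r4 i ol nl t l e hi, w => by
    cases w with
    | susp _ _ ht he hlen hlev =>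
      simp only [evalT, evalE]
      show sigma nl ((evalT t, l) :: evalE e) i = sigma nl (evalE e) (i-1)
      rw [show i = (i-1) + 1 by omega, sigma_cons_succ (by omega)]
      simp only [Nat.add_sub_cancel]
  | _, _, .r5 t1 t2 ol nl e, w => by
    simp only [evalT]
    rfl
  | _, _, .r6 t ol nl e, w => by
    cases w with
    | susp _ _ ht he hlen hlev =>
      cases ht with
      | lam h1 =>
        simp only [evalT, evalE]
        show Tm.lam (subst (upS (sigma nl (evalE e))) (evalT t)) = _
        obtain ⟨hp, hok, _⟩ := evalE_facts e he
        rw [sub_ext (evalT_pu t h1) (upS_sigma (LOK_weaken hok hlev) hp)]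
  | _, _, .m1 t ol1 nl1 e1 ol2 nl2 e2, w => by
    cases w with
    | susp _ _ hin he2 hlen2 hlev2 =>
      cases hin with
      | susp _ _ ht he1 hlen1 hlev1 =>
        simp only [evalT, evalE]
        obtain ⟨hp1, hok1, hlenL1⟩ := evalE_facts e1 he1
        obtain ⟨hp2, hok2, hlenL2⟩ := evalE_facts e2 he2
        have hx := evalT_pu t ht
        rw [subst_subst hx (sigma_pu hp2) (sigma_pu hp1)]
        apply sub_ext hx
        intro i hi
        rw [sigma_merge ((evalE e1).length + (evalE e2).length) _ _ _ _ le_rfl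
          (LOK_weaken hok1 hlev1) (LOK_weaken hok2 hlev2) hp1 hp2 i hi]
        rw [hlenL2, hlen2]
  | _, _, .appL t2 h1, w => by
    cases w with
    | app w1 w2 =>
      simp only [evalT]
      rw [invT _ h1 w1]
  | _, _, .appR t1 h2, w => by
    cases w with
    | app w1 w2 =>
      simp only [evalT]
      rw [invT _ h2 w2]
  | _, _, .lamC h1, w => by
    cases w with
    | lam w1 =>
      simp only [evalT]
      rw [invT _ h1 w1]
  | _, _, .suspT ol nl e h1, w => by
    cases w with
    | susp _ _ ht he hlen hlev =>
      simp only [evalT]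
      rw [invT _ h1 ht]
  | _, _, .suspE t ol nl h1, w => by
    cases w with
    | susp _ _ ht he hlen hlev =>
      simp only [evalT]
      rw [invE _ h1 he]

theorem invE : ∀ (e : Env) {e'}, SRE e e' → WfEnv e → evalE e = evalE e'
  | _, _, .m2 e1 nl1, w => by
    simp only [evalE]
    rw [mergeL_nil2]
  | _, _, .m3 ol2 e2, w => by
    simp only [evalE]
    rw [mergeL]
  | _, _, .m4 nl1 ol2 t l e2 hnl, w => by
    obtain ⟨m, rfl⟩ : ∃ m, nl1 = m + 1 := ⟨nl1 - 1, by omega⟩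
    simp only [evalE]
    rw [mergeL]
    simp only [Nat.add_sub_cancel]
  | _, _, .m5 t n e1 nl1 ol2 s l e2 hlt, w => by
    simp only [evalE]
    rw [mergeL, if_pos hlt]
  | _, _, .m6 t n e1 ol2 s l e2, w => by
    cases w with
    | merge _ _ he1 he2 hlev1 hlen2 =>
      simp only [evalE, evalT]
      rw [mergeL, if_neg (by omega : ¬ n < n)]
      congr 2
      simp only [Env.len] at hlen2
      obtain ⟨_, _, hlenL2⟩ := evalE_facts e2 (by cases he2 with | econs _ _ h _ => exact h)
      omega
  | _, _, .consT l e h1, w => by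
    cases w with
    | econs _ ht he hle =>
      simp only [evalE]
      rw [invT _ h1 ht]
  | _, _, .consE t l h1, w => by
    cases w with
    | econs _ ht he hle =>
      simp only [evalE]
      rw [invE _ h1 he]
  | _, _, .mergeL nl1 ol2 e2 h1, w => by
    cases w with
    | merge _ _ he1 he2 hlev1 hlen2 =>
      simp only [evalE]
      rw [invE _ h1 he1]
  | _, _, .mergeR e1 nl1 ol2 h2, w => by
    cases w with
    | merge _ _ he1 he2 hlev1 hlen2 =>
      simp only [evalE]
      rw [invE _ h2 he2]
end

/-! ### Reachability of the evaluation result -/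

open Relation (ReflTransGen)

theorem rtg_appL {a a' b} (h : ReflTransGen SR a a') :
    ReflTransGen SR (.app a b) (.app a' b) :=
  Relation.ReflTransGen.lift (p := _) (fun x => Tm.app x b) (fun _ _ h => SR.appL b h) _ _ h

theorem rtg_appR {a b b'} (h : ReflTransGen SR b b') :
    ReflTransGen SR (.app a b) (.app a b') :=
  Relation.ReflTransGen.lift (p := _) (fun x => Tm.app a x) (fun _ _ h => SR.appR a h) _ _ h

theorem rtg_lam {a a'} (h : ReflTransGen SR a a') :
    ReflTransGen SR (.lam a) (.lam a') :=
  Relation.ReflTransGen.lift (p := _) Tm.lam (fun _ _ h => SR.lamC h) _ _ h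

theorem rtg_suspT {a a' ol nl e} (h : ReflTransGen SR a a') :
    ReflTransGen SR (.susp a ol nl e) (.susp a' ol nl e) :=
  Relation.ReflTransGen.lift (p := _) (fun x => Tm.susp x ol nl e) (fun _ _ h => SR.suspT ol nl e h) _ _ h

theorem rtg_suspE {a ol nl e e'} (h : ReflTransGen SRE e e') :
    ReflTransGen SR (.susp a ol nl e) (.susp a ol nl e') :=
  Relation.ReflTransGen.lift (p := _) (fun x => Tm.susp a ol nl x) (fun _ _ h => SR.suspE a ol nl h) _ _ h

theorem rtg_consT {a a' l e} (h : ReflTransGen SR a a') :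
    ReflTransGen SRE (.econs a l e) (.econs a' l e) :=
  Relation.ReflTransGen.lift (p := _) (fun x => Env.econs x l e) (fun _ _ h => SRE.consT l e h) _ _ h

theorem rtg_consE {a l e e'} (h : ReflTransGen SRE e e') :
    ReflTransGen SRE (.econs a l e) (.econs a l e') :=
  Relation.ReflTransGen.lift (p := _) (fun x => Env.econs a l x) (fun _ _ h => SRE.consE a l h) _ _ h

theorem rtg_mergeL {e1 e1' nl1 ol2 e2} (h : ReflTransGen SRE e1 e1') :
    ReflTransGen SRE (.merge e1 nl1 ol2 e2) (.merge e1' nl1 ol2 e2) :=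
  Relation.ReflTransGen.lift (p := _) (fun x => Env.merge x nl1 ol2 e2)
    (fun _ _ h => SRE.mergeL nl1 ol2 e2 h) _ _ h

theorem rtg_mergeR {e1 nl1 ol2 e2 e2'} (h : ReflTransGen SRE e2 e2') :
    ReflTransGen SRE (.merge e1 nl1 ol2 e2) (.merge e1 nl1 ol2 e2') :=
  Relation.ReflTransGen.lift (p := _) (fun x => Env.merge e1 nl1 ol2 x)
    (fun _ _ h => SRE.mergeR e1 nl1 ol2 h) _ _ h

/-- identity prefix environment at depth `d` for a shift by `k`. -/
def idL : Nat → Nat → Env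
  | 0, _ => .nil
  | d+1, k => .econs (.idx 1) (k+d+1) (idL d k)

/-- the renaming shifting by `k` under `d` binders. -/
def rd (d k : Nat) : Nat → Nat := fun i => if i ≤ d then i else i + k

theorem shift_reach_le : ∀ (i d nl k : Nat), 1 ≤ i → i ≤ d → k + d ≤ nl →
    ReflTransGen SR (.susp (.idx i) d nl (idL d k)) (.idx (i + (nl - (k+d)))) := by
  intro i
  induction i with
  | zero => intro d nl k h; omega
  | succ j ih =>
    intro d nl k _ hd hk
    obtain ⟨d', rfl⟩ : ∃ d', d = d' + 1 := ⟨d-1, by omega⟩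
    rcases Nat.eq_zero_or_pos j with rfl | hj
    · exact .head (.r3 _ _ _ _ _) (.single (.r2 1 _ le_rfl))
    · have harith : (j+1) + (nl - (k+(d'+1))) = j + (nl - (k+d')) := by omega
      rw [harith]
      exact .head (.r4 (j+1) (d'+1) nl _ _ _ (by omega))
        (ih d' nl k (by omega) (by omega) (by omega))

theorem shift_reach_gt : ∀ (d i nl k : Nat), d < i → 1 ≤ i →
    ReflTransGen SR (.susp (.idx i) d nl (idL d k)) (.idx (i - d + nl)) := by
  intro d
  induction d with
  | zero =>
    intro i nl k hd hi
    have harith : i - 0 + nl = i + nl := by omega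
    rw [harith]
    exact .single (.r2 i nl hi)
  | succ d' ih =>
    intro i nl k hd hi
    have harith : i - (d'+1) + nl = (i-1) - d' + nl := by omega
    rw [harith]
    exact .head (.r4 i (d'+1) nl _ _ _ (by omega)) (ih (i-1) nl k (by omega) (by omega))

theorem shift_reach : ∀ {s : Tm}, Pu s → ∀ (d k : Nat),
    ReflTransGen SR (.susp s d (k+d) (idL d k)) (rename (rd d k) s) := by
  intro s hs
  induction hs with
  | const c => intro d k; exact .single (.r1 c _ _ _)
  | idx i hi =>
    intro d k
    show ReflTransGen SR _ (.idx (rd d k i))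
    by_cases h : i ≤ d
    · have := shift_reach_le i d (k+d) k hi h le_rfl
      rw [show i + ((k+d) - (k+d)) = i by omega] at this
      rw [show rd d k i = i by simp [rd, h]]
      exact this
    · have := shift_reach_gt d i (k+d) k (by omega) hi
      rw [show i - d + (k+d) = i + k by omega] at this
      rw [show rd d k i = i + k by simp [rd, h]]
      exact this
  | app ha hb iha ihb =>
    intro d k
    exact .head (.r5 _ _ _ _ _) (.trans (rtg_appL (iha d k)) (rtg_appR (ihb d k)))
  | lam ha ih =>
    intro d k
    refine .head (.r6 _ _ _ _) (rtg_lam ?_)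
    show ReflTransGen SR (.susp _ (d+1) (k+(d+1)) (idL (d+1) k)) _
    have := ih (d+1) k
    refine this.trans ?_
    rw [ren_ext ha (r' := upR (rd d k)) ?_]
    intro i hi
    obtain rfl | ⟨j, hj, rfl⟩ := one_or_succ hi
    · rw [upR_one]; simp [rd]
    · rw [upR_succ _ hj]; simp only [rd]
      by_cases h : j ≤ d
      · simp [show j + 1 ≤ d + 1 by omega, h]
      · simp [show ¬ (j + 1 ≤ d + 1) by omega, h]; omega

theorem idx_reach : ∀ (L : List (Tm × Nat)) (nl i : Nat), PuL L → 1 ≤ i →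
    i ≤ L.length →
    ReflTransGen SR (.susp (.idx i) L.length nl (toEnv L)) (sigma nl L i) := by
  intro L
  induction L with
  | nil => intro nl i _ h1 h2; simp at h2; omega
  | cons p L ih =>
    intro nl i hp h1 h2
    rcases p with ⟨s, l⟩
    obtain rfl | ⟨j, hj, rfl⟩ := one_or_succ h1
    · rw [sigma_lookup le_rfl h2]
      simp only [show (1:Nat) - 1 = 0 from rfl, List.getElem_cons_zero]
      refine .head (.r3 _ _ _ _ _) ?_
      have hps : Pu s := hp _ (List.mem_cons_self)
      have := shift_reach hps 0 (nl - l)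
      rw [show (nl - l) + 0 = nl - l by omega] at this
      refine this.trans ?_
      rw [ren_ext hps (r' := (· + (nl - l))) ?_]
      intro i hi
      simp [rd, show ¬ i ≤ 0 by omega]
    · rw [sigma_cons_succ hj]
      show ReflTransGen SR (.susp (.idx (j+1)) (L.length + 1) nl
        (.econs s l (toEnv L))) _
      refine .head (.r4 (j+1) (L.length + 1) nl _ _ _ (by omega)) ?_
      have := ih nl j (PuL_cons hp) hj (by simpa using h2)
      simpa using this

theorem idx_over_reach : ∀ (L : List (Tm × Nat)) (nl i : Nat), L.length < i → 1 ≤ i →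
    ReflTransGen SR (.susp (.idx i) L.length nl (toEnv L))
      (.idx (i - L.length + nl)) := by
  intro L
  induction L with
  | nil =>
    intro nl i h2 h1
    rw [show i - List.length [] + nl = i + nl by simp]
    exact .single (.r2 i nl h1)
  | cons p L ih =>
    intro nl i h2 h1
    rcases p with ⟨s, l⟩
    show ReflTransGen SR (.susp (.idx i) (L.length + 1) nl (.econs s l (toEnv L))) _
    refine .head (.r4 i (L.length + 1) nl _ _ _ (by simp at h2; omega)) ?_
    have := ih nl (i-1) (by simp at h2; omega) (by simp at h2; omega)
    rw [show i - 1 - L.length + nl = i - ((L.length + 1)) + nl by omega] at this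
    simpa using this

theorem subst_reach : ∀ {u : Tm}, Pu u → ∀ (nl : Nat) (L : List (Tm × Nat)),
    PuL L → LOK L nl →
    ReflTransGen SR (.susp u L.length nl (toEnv L)) (subst (sigma nl L) u) := by
  intro u hu
  induction hu with
  | const c => intro nl L _ _; exact .single (.r1 c _ _ _)
  | idx i hi =>
    intro nl L hp hok
    show ReflTransGen SR _ (sigma nl L i)
    by_cases h : i ≤ L.length
    · exact idx_reach L nl i hp hi h
    · rw [sigma_over (by omega)]
      exact idx_over_reach L nl i (by omega) hi
  | app ha hb iha ihb =>
    intro nl L hp hok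
    exact .head (.r5 _ _ _ _ _)
      (.trans (rtg_appL (iha nl L hp hok)) (rtg_appR (ihb nl L hp hok)))
  | lam ha ih =>
    intro nl L hp hok
    refine .head (.r6 _ _ _ _) (rtg_lam ?_)
    have hp' : PuL ((Tm.idx 1, nl+1) :: L) := by
      intro p hq
      rcases List.mem_cons.mp hq with rfl | hq
      · exact .idx 1 le_rfl
      · exact hp p hq
    have hok' : LOK ((Tm.idx 1, nl+1) :: L) (nl+1) := ⟨le_rfl, LOK_weaken hok (by omega)⟩
    have := ih (nl+1) ((Tm.idx 1, nl+1) :: L) hp' hok'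
    simp only [toEnv, List.length_cons] at this
    refine this.trans ?_
    rw [sub_ext ha (upS_sigma hok hp)]

theorem merge_reach : ∀ (k : Nat) (L1 : List (Tm × Nat)) (nl1 : Nat)
    (L2 : List (Tm × Nat)) (nl2 : Nat), L1.length + L2.length ≤ k →
    PuL L1 → PuL L2 → LOK L1 nl1 → LOK L2 nl2 →
    ReflTransGen SRE (.merge (toEnv L1) nl1 L2.length (toEnv L2))
      (toEnv (mergeL L1 nl1 L2)) := by
  intro k
  induction k using Nat.strong_induction_on with
  | _ k IH =>
  intro L1 nl1 L2 nl2 hk p1 p2 h1 h2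
  cases L2 with
  | nil =>
    rw [mergeL_nil2]
    exact .single (.m2 (toEnv L1) nl1)
  | cons q L2 =>
    rcases q with ⟨s, l⟩
    cases L1 with
    | nil =>
      cases nl1 with
      | zero =>
        rw [mergeL]
        exact .single (.m3 _ _)
      | succ m =>
        rw [mergeL]
        refine .head (.m4 (m+1) _ s l (toEnv L2) (by omega)) ?_
        have := IH (L2.length) (by simp only [List.length_nil, List.length_cons] at hk; omega)
          [] m L2 l (by simp) (by intro p hp; cases hp) (PuL_cons p2) trivial h2.2
        simpa [toEnv] using this
    | cons q1 L1 =>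
      rcases q1 with ⟨t, n⟩
      by_cases hlt : n < nl1
      · rw [mergeL, if_pos hlt]
        refine .head (.m5 t n (toEnv L1) nl1 _ s l (toEnv L2) hlt) ?_
        have := IH (L1.length + 1 + L2.length)
          (by simp only [List.length_cons] at hk; omega)
          ((t,n)::L1) (nl1 - 1) L2 l (by simp only [List.length_cons]; omega)
          p1 (PuL_cons p2) ⟨by omega, h1.2⟩ h2.2
        simpa [toEnv] using this
      · have hn : n = nl1 := by have := h1.1; omega
        subst hn
        rw [mergeL, if_neg hlt]
        refine .head (.m6 t n (toEnv L1) _ s l (toEnv L2)) ?_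
        simp only [toEnv]
        have hhead : ReflTransGen SR (.susp t (((s,l)::L2).length) l (toEnv ((s,l)::L2)))
            (subst (sigma l ((s,l)::L2)) t) :=
          subst_reach (p1 _ (List.mem_cons_self)) l ((s,l)::L2) p2 ⟨le_rfl, h2.2⟩
        simp only [toEnv, List.length_cons] at hhead
        have harith : l + (n - (L2.length + 1)) = l + (n - (L2.length + 1)) := rfl
        refine .trans (rtg_consT ?_) (rtg_consE ?_)
        · exact hhead
        · have := IH (L1.length + (L2.length + 1))
            (by simp only [List.length_cons] at hk; omega)
            L1 n ((s,l)::L2) nl2 (by simp only [List.length_cons]; omega)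
            (PuL_cons p1) p2 h1.2 h2
          simp only [toEnv, List.length_cons] at this
          exact this

mutual
theorem reachT : ∀ (t : Tm), WfTm t → ReflTransGen SR t (evalT t)
  | .const c, _ => by rw [evalT]
  | .idx i, _ => by rw [evalT]
  | .app a b, w => by
    cases w with
    | app wa wb =>
      rw [evalT]
      exact .trans (rtg_appL (reachT a wa)) (rtg_appR (reachT b wb))
  | .lam a, w => by
    cases w with
    | lam wa =>
      rw [evalT]
      exact rtg_lam (reachT a wa)
  | .susp t ol nl e, w => by
    cases w with
    | susp _ _ ht he hlen hlev =>
      rw [evalT]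
      obtain ⟨hp, hok, hlenL⟩ := evalE_facts e he
      refine .trans (rtg_suspT (reachT t ht)) (.trans (rtg_suspE (reachE e he)) ?_)
      have := subst_reach (evalT_pu t ht) nl (evalE e) hp (LOK_weaken hok hlev)
      rw [hlenL, hlen] at this
      exact this

theorem reachE : ∀ (e : Env), WfEnv e → ReflTransGen SRE e (toEnv (evalE e))
  | .nil, _ => by rw [evalE]; exact .refl
  | .econs t l e, w => by
    cases w with
    | econs _ ht he hle =>
      rw [evalE]
      exact .trans (rtg_consT (reachT t ht)) (rtg_consE (reachE e he))
  | .merge e1 nl1 ol2 e2, w => by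
    cases w with
    | merge _ _ he1 he2 hlev1 hlen2 =>
      rw [evalE]
      obtain ⟨hp1, hok1, hlen1⟩ := evalE_facts e1 he1
      obtain ⟨hp2, hok2, hlen2'⟩ := evalE_facts e2 he2
      refine .trans (rtg_mergeL (reachE e1 he1)) (.trans (rtg_mergeR (reachE e2 he2)) ?_)
      have := merge_reach ((evalE e1).length + (evalE e2).length)
        (evalE e1) nl1 (evalE e2) (Env.lev e2) le_rfl hp1 hp2
        (LOK_weaken hok1 hlev1) hok2
      rw [hlen2', hlen2] at this
      exact this
end

/-! ### Lifting to the reflexive-transitive closure -/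

theorem pres_rtgT {s u : Tm} (w : WfTm s) (h : Relation.ReflTransGen SR s u) :
    WfTm u := by
  induction h with
  | refl => exact w
  | tail _ h2 ih => exact presT _ h2 ih

theorem pres_rtgE {s u : Env} (w : WfEnv s) (h : Relation.ReflTransGen SRE s u) :
    WfEnv u := by
  induction h with
  | refl => exact w
  | tail _ h2 ih => exact (presE _ h2 ih).1

theorem inv_rtgT {s u : Tm} (w : WfTm s) (h : Relation.ReflTransGen SR s u) :
    evalT s = evalT u := by
  induction h with
  | refl => rfl
  | tail h1 h2 ih => exact ih.trans (invT _ h2 (pres_rtgT w h1))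

theorem inv_rtgE {s u : Env} (w : WfEnv s) (h : Relation.ReflTransGen SRE s u) :
    evalE s = evalE u := by
  induction h with
  | refl => rfl
  | tail h1 h2 ih => exact ih.trans (invE _ h2 (pres_rtgE w h1))

/-- the reflexive-transitive rewrite relation generated by the
reading and merging rules is confluent on well-formed expressions; in
particular every well-formed suspension expression has a unique normal form
with respect to these rules. -/
theorem rm_confluent_and_unique_normal_forms :
    (∀ s u v : Tm, WfTm s → Relation.ReflTransGen SR s u →
        Relation.ReflTransGen SR s v →
        ∃ t, Relation.ReflTransGen SR u t ∧ Relation.ReflTransGen SR v t) ∧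
    (∀ s u v : Env, WfEnv s → Relation.ReflTransGen SRE s u →
        Relation.ReflTransGen SRE s v →
        ∃ t, Relation.ReflTransGen SRE u t ∧ Relation.ReflTransGen SRE v t) ∧
    (∀ s : Tm, WfTm s → ∃! u, Relation.ReflTransGen SR s u ∧ NormalT u) ∧
    (∀ s : Env, WfEnv s → ∃! u, Relation.ReflTransGen SRE s u ∧ NormalE u) := by
  refine ⟨?_, ?_, ?_, ?_⟩
  · intro s u v ws hu hv
    refine ⟨evalT s, ?_, ?_⟩
    · have wu := pres_rtgT ws hu
      have h1 := inv_rtgT ws hu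
      have := reachT u wu
      rw [← h1] at this
      exact this
    · have wv := pres_rtgT ws hv
      have h1 := inv_rtgT ws hv
      have := reachT v wv
      rw [← h1] at this
      exact this
  · intro s u v ws hu hv
    refine ⟨toEnv (evalE s), ?_, ?_⟩
    · have wu := pres_rtgE ws hu
      have h1 := inv_rtgE ws hu
      have := reachE u wu
      rw [← h1] at this
      exact this
    · have wv := pres_rtgE ws hv
      have h1 := inv_rtgE ws hv
      have := reachE v wv
      rw [← h1] at this
      exact this
  · intro s ws
    refine ⟨evalT s, ⟨reachT s ws, normalT_of_pu (evalT_pu s ws)⟩, ?_⟩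
    rintro y ⟨hy, hn⟩
    have wy := pres_rtgT ws hy
    have h1 := inv_rtgT ws hy
    have h2 := rtg_normalT hn (reachT y wy)
    rw [← h2, ← h1]
  · intro s ws
    refine ⟨toEnv (evalE s), ⟨reachE s ws, normalE_of_puL (evalE_facts s ws).1⟩, ?_⟩
    rintro y ⟨hy, hn⟩
    have wy := pres_rtgE ws hy
    have h1 := inv_rtgE ws hy
    have h2 := rtg_normalE hn (reachE y wy)
    rw [← h2, ← h1]
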